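/- Let n ≥ 2 and let E = {[w] ⊕ (z·I_{n−1}) : z, w ∈ ℂ} ⊂ ℂ^{n×n}. For a matrix A ∈ ℂ^{n×n} and r > 0, one has μ_E(A) ≤ 1/r if and only if the zero set in ℂ² of the polynomial (z,w) ↦ (1 + Σ_{j=1}^{n−1}(−1)^j Y_j(A) z^j) − w(Σ_{j=0}^{n−1}(−1)^j X_{j+1}(A) z^j) is disjoint from (r𝔻)² = {(z,w) : |z| < r, |w| < r}, where (X(A), Y(A)) = π_n(A) is as in the definition of π_n. -/

import Mathlib

open Matrix BigOperators
open scoped ENNReal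

/-- Determinant of the principal submatrix of `A` indexed by `s`. -/
noncomputable def subDet {m : ℕ} (A : Matrix (Fin m) (Fin m) ℂ) (s : Finset (Fin m)) : ℂ :=
  Matrix.det (A.submatrix (fun i : {a : Fin m // a ∈ s} => (i : Fin m))
    (fun i : {a : Fin m // a ∈ s} => (i : Fin m)))

/-- `piX A j` = sum of dets of `j × j` principal submatrices whose index set contains 0. -/
noncomputable def piX {m : ℕ} [NeZero m] (A : Matrix (Fin m) (Fin m) ℂ) (j : ℕ) : ℂ :=
  ∑ s ∈ Finset.univ.filter (fun s : Finset (Fin m) => s.card = j ∧ (0 : Fin m) ∈ s),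
    subDet A s

/-- `piY A j` = sum of dets of `j × j` principal submatrices whose index set avoids 0. -/
noncomputable def piY {m : ℕ} [NeZero m] (A : Matrix (Fin m) (Fin m) ℂ) (j : ℕ) : ℂ :=
  ∑ s ∈ Finset.univ.filter (fun s : Finset (Fin m) => s.card = j ∧ (0 : Fin m) ∉ s),
    subDet A s

/-- The operator norm of a complex matrix, relative to the Euclidean norm on `ℂ^N`. -/
noncomputable def opNorm {N : ℕ} (M : Matrix (Fin N) (Fin N) ℂ) : ℝ :=
  ‖LinearMap.toContinuousLinearMap (Matrix.toEuclideanLin M)‖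

/-- The structured singular value `μ_E(A) = (inf{‖X‖ : X ∈ E, I − AX singular})⁻¹`,
valued in `ℝ≥0∞` (the infimum over the empty set is `∞`, so then `μ_E(A) = 0`). -/
noncomputable def mu {N : ℕ} (E : Set (Matrix (Fin N) (Fin N) ℂ))
    (A : Matrix (Fin N) (Fin N) ℂ) : ℝ≥0∞ :=
  (⨅ X : {X : Matrix (Fin N) (Fin N) ℂ // X ∈ E ∧ Matrix.det (1 - A * X) = 0},
    ENNReal.ofReal (opNorm X.1))⁻¹

/-- The block-diagonal matrix `[w] ⊕ (z·I_{n+1})`. -/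
noncomputable def bdiag (n : ℕ) (w z : ℂ) : Matrix (Fin (n+2)) (Fin (n+2)) ℂ :=
  Matrix.diagonal (fun i => if i = 0 then w else z)

lemma det_eq_subDet {m : ℕ} (M : Matrix (Fin m) (Fin m) ℂ) (s : Finset (Fin m))
    (h : ∀ i ∉ s, ∀ j, M i j = if i = j then 1 else 0) :
    M.det = subDet M s := by
  classical
  let e : {a : Fin m // a ∈ s} ⊕ {a : Fin m // ¬ a ∈ s} ≃ Fin m :=
    Equiv.sumCompl (fun a => a ∈ s)
  rw [← Matrix.det_submatrix_equiv_self e M]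
  have he : M.submatrix e e = Matrix.fromBlocks
      (M.submatrix (fun i : {a : Fin m // a ∈ s} => (i : Fin m))
        (fun i : {a : Fin m // a ∈ s} => (i : Fin m)))
      (M.submatrix (fun i : {a : Fin m // a ∈ s} => (i : Fin m))
        (fun i : {a : Fin m // ¬ a ∈ s} => (i : Fin m)))
      0 1 := by
    ext i j
    cases i with
    | inl i =>
      cases j with
      | inl j => rfl
      | inr j => rfl
    | inr i =>
      cases j with
      | inl j =>
        have hij : (i : Fin m) ≠ (j : Fin m) := by
          intro hh
          exact i.2 (hh ▸ j.2)
        simp only [Matrix.submatrix_apply, Matrix.fromBlocks_apply₂₁, Matrix.zero_apply]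
        show M (e (Sum.inr i)) (e (Sum.inl j)) = 0
        simp only [e, Equiv.sumCompl_apply_inr, Equiv.sumCompl_apply_inl]
        rw [h i i.2 j, if_neg hij]
      | inr j =>
        simp only [Matrix.submatrix_apply, Matrix.fromBlocks_apply₂₂]
        show M (e (Sum.inr i)) (e (Sum.inr j)) = (1 : Matrix _ _ ℂ) i j
        simp only [e, Equiv.sumCompl_apply_inr]
        rw [h i i.2 j, Matrix.one_apply]
        by_cases hij : i = j
        · subst hij; simp
        · rw [if_neg (fun hh => hij (Subtype.ext hh)), if_neg hij]
  rw [he, Matrix.det_fromBlocks_zero₂₁, Matrix.det_one, mul_one]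
  rfl

lemma det_one_add' {m : ℕ} (B : Matrix (Fin m) (Fin m) ℂ) :
    (1 + B).det = ∑ s : Finset (Fin m), subDet B s := by
  classical
  have key := (Matrix.detRowAlternating (R := ℂ) (n := Fin m)).toMultilinearMap.map_add_univ
      (fun i => B i) (fun i => (1 : Matrix (Fin m) (Fin m) ℂ) i)
  have h1 : ((fun i => B i) + (fun i => (1 : Matrix (Fin m) (Fin m) ℂ) i)) =
      ((1 + B : Matrix (Fin m) (Fin m) ℂ) : Fin m → Fin m → ℂ) := by
    funext i j
    simp [Matrix.add_apply, add_comm]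
  rw [h1] at key
  have key' : (1 + B).det = ∑ s : Finset (Fin m),
      Matrix.det (Finset.piecewise s (fun i => B i)
        (fun i => (1 : Matrix (Fin m) (Fin m) ℂ) i)) := key
  rw [key']
  refine Finset.sum_congr rfl fun s _ => ?_
  refine (det_eq_subDet _ s ?_).trans ?_
  swap
  · unfold subDet
    congr 1
    ext i j
    simp [Matrix.submatrix, Finset.piecewise, i.1.2, i.2]
  · intro i hi j
    simp [Finset.piecewise, hi, Matrix.one_apply]




lemma detKey (n : ℕ) (A : Matrix (Fin (n+2)) (Fin (n+2)) ℂ) (w z : ℂ) :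
    (1 - A * bdiag n w z).det =
      (1 + ∑ j ∈ Finset.Icc 1 (n+1), (-1 : ℂ) ^ j * piY A j * z ^ j)
        - w * ∑ j ∈ Finset.range (n+2), (-1 : ℂ) ^ j * piX A (j+1) * z ^ j := by
  classical
  set d : Fin (n+2) → ℂ := fun i => if i = 0 then w else z with hd
  have h1 : (1 - A * bdiag n w z) = 1 + (-(A * bdiag n w z)) := by
    rw [sub_eq_add_neg]
  rw [h1, det_one_add']
  have hterm : ∀ s : Finset (Fin (n+2)), subDet (-(A * bdiag n w z)) s =
      (-1 : ℂ)^s.card * subDet A s *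
        (if (0 : Fin (n+2)) ∈ s then w * z ^ (s.card - 1) else z ^ s.card) := by
    intro s
    have hneg : subDet (-(A * bdiag n w z)) s = (-1 : ℂ)^s.card * subDet (A * bdiag n w z) s := by
      unfold subDet
      have : ((-(A * bdiag n w z)).submatrix (fun i : {a : Fin (n+2) // a ∈ s} => (i : Fin (n+2)))
          (fun i : {a : Fin (n+2) // a ∈ s} => (i : Fin (n+2)))) =
          -((A * bdiag n w z).submatrix (fun i : {a : Fin (n+2) // a ∈ s} => (i : Fin (n+2)))
          (fun i : {a : Fin (n+2) // a ∈ s} => (i : Fin (n+2)))) := rfl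
      rw [this, Matrix.det_neg, Fintype.card_coe]
    have hmul : subDet (A * bdiag n w z) s = subDet A s * ∏ i ∈ s, d i := by
      unfold subDet
      have : ((A * bdiag n w z).submatrix (fun i : {a : Fin (n+2) // a ∈ s} => (i : Fin (n+2)))
          (fun i : {a : Fin (n+2) // a ∈ s} => (i : Fin (n+2)))) =
          (A.submatrix (fun i : {a : Fin (n+2) // a ∈ s} => (i : Fin (n+2)))
            (fun i : {a : Fin (n+2) // a ∈ s} => (i : Fin (n+2)))) *
            Matrix.diagonal (fun i : {a : Fin (n+2) // a ∈ s} => d (i : Fin (n+2))) := by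
        ext i j
        simp [bdiag, Matrix.mul_diagonal, hd]
      rw [this, Matrix.det_mul, Matrix.det_diagonal, Finset.prod_coe_sort]
    have hprod : (∏ i ∈ s, d i) =
        if (0 : Fin (n+2)) ∈ s then w * z ^ (s.card - 1) else z ^ s.card := by
      by_cases h0 : (0 : Fin (n+2)) ∈ s
      · rw [if_pos h0, ← Finset.mul_prod_erase s d h0]
        have hz : ∏ i ∈ s.erase 0, d i = z ^ (s.card - 1) := by
          rw [Finset.prod_congr rfl (fun i hi => show d i = z from
            if_neg (Finset.mem_erase.mp hi).1), Finset.prod_const,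
            Finset.card_erase_of_mem h0]
        rw [hz]
        simp [hd]
      · rw [if_neg h0]
        rw [Finset.prod_congr rfl (fun i hi => show d i = z from
          if_neg (fun h => h0 (by rw [← h]; exact hi))), Finset.prod_const]
    rw [hneg, hmul, hprod, mul_assoc]
  rw [Finset.sum_congr rfl (fun s _ => hterm s)]
  rw [← Finset.sum_filter_add_sum_filter_not Finset.univ (fun s => (0 : Fin (n+2)) ∈ s)]
  have fib : ∀ (t : Finset (Finset (Fin (n+2)))) (f : Finset (Fin (n+2)) → ℂ),
      ∑ s ∈ t, f s = ∑ j ∈ Finset.range (n+3), ∑ s ∈ t.filter (fun s => s.card = j), f s := by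
    intro t f
    rw [Finset.sum_fiberwise_of_maps_to (fun s _ => Finset.mem_range.mpr
      (Nat.lt_succ_of_le (by simpa using s.card_le_univ))) f]
  have SA : ∑ s ∈ Finset.univ.filter (fun s : Finset (Fin (n+2)) => (0 : Fin (n+2)) ∈ s),
      (-1 : ℂ)^s.card * subDet A s *
        (if (0 : Fin (n+2)) ∈ s then w * z ^ (s.card - 1) else z ^ s.card)
      = - (w * ∑ j ∈ Finset.range (n+2), (-1 : ℂ) ^ j * piX A (j+1) * z ^ j) := by
    rw [fib]
    have hinner : ∀ j, ∑ s ∈ (Finset.univ.filter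
          (fun s : Finset (Fin (n+2)) => (0 : Fin (n+2)) ∈ s)).filter (fun s => s.card = j),
        (-1 : ℂ)^s.card * subDet A s *
          (if (0 : Fin (n+2)) ∈ s then w * z ^ (s.card - 1) else z ^ s.card)
        = (-1 : ℂ)^j * piX A j * (w * z ^ (j - 1)) := by
      intro j
      rw [Finset.filter_filter]
      have hset : Finset.univ.filter (fun s : Finset (Fin (n+2)) =>
          (0 : Fin (n+2)) ∈ s ∧ s.card = j) =
          Finset.univ.filter (fun s : Finset (Fin (n+2)) => s.card = j ∧ (0 : Fin (n+2)) ∈ s) := by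
        ext s; simp [and_comm]
      rw [hset]
      calc ∑ s ∈ Finset.univ.filter (fun s : Finset (Fin (n+2)) =>
              s.card = j ∧ (0 : Fin (n+2)) ∈ s),
            (-1 : ℂ)^s.card * subDet A s *
              (if (0 : Fin (n+2)) ∈ s then w * z ^ (s.card - 1) else z ^ s.card)
          = ∑ s ∈ Finset.univ.filter (fun s : Finset (Fin (n+2)) =>
              s.card = j ∧ (0 : Fin (n+2)) ∈ s),
            (-1 : ℂ)^j * subDet A s * (w * z ^ (j - 1)) := by
            refine Finset.sum_congr rfl (fun s hs => ?_)
            obtain ⟨hcard, h0⟩ := (Finset.mem_filter.mp hs).2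
            rw [if_pos h0, hcard]
        _ = (-1 : ℂ)^j * piX A j * (w * z ^ (j - 1)) := by
            simp only [piX, Finset.mul_sum, Finset.sum_mul]
    rw [Finset.sum_congr rfl (fun j _ => hinner j)]
    rw [Finset.sum_range_succ' (fun j => (-1 : ℂ)^j * piX A j * (w * z ^ (j-1))) (n+2)]
    have h0 : piX A 0 = 0 := by
      rw [piX]
      apply Finset.sum_eq_zero
      intro s hs
      obtain ⟨hcard, h0s⟩ := (Finset.mem_filter.mp hs).2
      rw [Finset.card_eq_zero.mp hcard] at h0s
      exact absurd h0s (Finset.notMem_empty _)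
    rw [h0]
    rw [Finset.mul_sum, ← Finset.sum_neg_distrib]
    simp only [mul_zero, zero_mul, add_zero]
    refine Finset.sum_congr rfl (fun k _ => ?_)
    simp only [Nat.add_sub_cancel]
    ring
  have SB : ∑ s ∈ Finset.univ.filter (fun s : Finset (Fin (n+2)) => ¬ (0 : Fin (n+2)) ∈ s),
      (-1 : ℂ)^s.card * subDet A s *
        (if (0 : Fin (n+2)) ∈ s then w * z ^ (s.card - 1) else z ^ s.card)
      = 1 + ∑ j ∈ Finset.Icc 1 (n+1), (-1 : ℂ) ^ j * piY A j * z ^ j := by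
    rw [fib]
    have hinner : ∀ j, ∑ s ∈ (Finset.univ.filter
          (fun s : Finset (Fin (n+2)) => ¬ (0 : Fin (n+2)) ∈ s)).filter (fun s => s.card = j),
        (-1 : ℂ)^s.card * subDet A s *
          (if (0 : Fin (n+2)) ∈ s then w * z ^ (s.card - 1) else z ^ s.card)
        = (-1 : ℂ)^j * piY A j * z ^ j := by
      intro j
      rw [Finset.filter_filter]
      have hset : Finset.univ.filter (fun s : Finset (Fin (n+2)) =>
          ¬ (0 : Fin (n+2)) ∈ s ∧ s.card = j) =
          Finset.univ.filter (fun s : Finset (Fin (n+2)) => s.card = j ∧ ¬ (0 : Fin (n+2)) ∈ s) := by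
        ext s; simp [and_comm]
      rw [hset]
      calc ∑ s ∈ Finset.univ.filter (fun s : Finset (Fin (n+2)) =>
              s.card = j ∧ ¬ (0 : Fin (n+2)) ∈ s),
            (-1 : ℂ)^s.card * subDet A s *
              (if (0 : Fin (n+2)) ∈ s then w * z ^ (s.card - 1) else z ^ s.card)
          = ∑ s ∈ Finset.univ.filter (fun s : Finset (Fin (n+2)) =>
              s.card = j ∧ ¬ (0 : Fin (n+2)) ∈ s),
            (-1 : ℂ)^j * subDet A s * z ^ j := by
            refine Finset.sum_congr rfl (fun s hs => ?_)
            obtain ⟨hcard, h0⟩ := (Finset.mem_filter.mp hs).2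
            rw [if_neg h0, hcard]
        _ = (-1 : ℂ)^j * piY A j * z ^ j := by
            simp only [piY, Finset.mul_sum, Finset.sum_mul]
    rw [Finset.sum_congr rfl (fun j _ => hinner j)]
    rw [Finset.sum_range_succ]
    have htop : piY A (n+2) = 0 := by
      rw [piY]
      apply Finset.sum_eq_zero
      intro s hs
      obtain ⟨hcard, h0s⟩ := (Finset.mem_filter.mp hs).2
      have hu : s = Finset.univ := by
        apply (Finset.card_eq_iff_eq_univ s).mp
        simpa using hcard
      rw [hu] at h0s
      exact absurd (Finset.mem_univ _) h0s
    rw [htop, mul_zero, zero_mul, add_zero]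
    rw [Finset.sum_range_eq_add_Ico _ (Nat.succ_pos _), Nat.succ_eq_add_one, Finset.Ico_add_one_right_eq_Icc]
    have h0 : piY A 0 = 1 := by
      rw [piY]
      have hset : Finset.univ.filter (fun s : Finset (Fin (n+2)) =>
          s.card = 0 ∧ ¬ (0 : Fin (n+2)) ∈ s) = {∅} := by
        ext s
        simp [Finset.card_eq_zero]
        rintro rfl
        simp
      rw [hset, Finset.sum_singleton]
      haveI : IsEmpty {a : Fin (n+2) // a ∈ (∅ : Finset (Fin (n+2)))} :=
        ⟨fun i => (Finset.notMem_empty _ i.2)⟩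
      rw [subDet, Matrix.det_isEmpty]
    rw [h0]
    norm_num
  rw [SA, SB]
  ring


lemma opNorm_diagonal_le {m : ℕ} (d : Fin m → ℂ) (C : ℝ) (hC : 0 ≤ C)
    (h : ∀ i, ‖d i‖ ≤ C) : opNorm (Matrix.diagonal d) ≤ C := by
  apply ContinuousLinearMap.opNorm_le_bound _ hC
  intro x
  set y := LinearMap.toContinuousLinearMap (Matrix.toEuclideanLin (Matrix.diagonal d)) x with hy
  have hyi : ∀ i, y i = d i * x i := by
    intro i
    show (Matrix.toEuclideanLin (Matrix.diagonal d) x) i = _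
    rw [Matrix.toEuclideanLin_apply]
    simp [Matrix.mulVec_diagonal]
  rw [EuclideanSpace.norm_eq, EuclideanSpace.norm_eq]
  rw [show C * Real.sqrt (∑ i, ‖x i‖^2) = Real.sqrt (C^2 * ∑ i, ‖x i‖^2) by
    rw [Real.sqrt_mul (sq_nonneg C), Real.sqrt_sq hC]]
  apply Real.sqrt_le_sqrt
  rw [Finset.mul_sum]
  apply Finset.sum_le_sum
  intro i _
  rw [hyi i, norm_mul, mul_pow]
  refine mul_le_mul_of_nonneg_right ?_ (sq_nonneg _)
  refine pow_le_pow_left₀ (norm_nonneg _) ?_ 2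
  simpa using h i

set_option synthInstance.maxHeartbeats 1000000 in
lemma abs_le_opNorm_diagonal {m : ℕ} (d : Fin m → ℂ) (i : Fin m) :
    ‖d i‖ ≤ opNorm (Matrix.diagonal d) := by
  have h := ContinuousLinearMap.le_opNorm
    (LinearMap.toContinuousLinearMap (Matrix.toEuclideanLin (Matrix.diagonal d)))
    (EuclideanSpace.single i (1 : ℂ))
  rw [EuclideanSpace.norm_single] at h
  have hval : (LinearMap.toContinuousLinearMap (Matrix.toEuclideanLin (Matrix.diagonal d)))
      (EuclideanSpace.single i (1 : ℂ)) = EuclideanSpace.single i (d i) := by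
    show Matrix.toEuclideanLin (Matrix.diagonal d) (EuclideanSpace.single i (1 : ℂ)) = _
    rw [Matrix.toEuclideanLin_apply]
    apply (WithLp.equiv 2 (Fin m → ℂ)).injective
    funext j
    simp [Matrix.mulVec_diagonal, EuclideanSpace.single_apply]
  rw [hval, EuclideanSpace.norm_single] at h
  simpa [opNorm] using h

/-- For `E = {[w] ⊕ zI}` and `r > 0`: `μ_E(A) ≤ 1/r` iff the zero set of the polynomial
`(1 + Σ (−1)^j Y_j(A) z^j) − w Σ (−1)^j X_{j+1}(A) z^j` is disjoint from `(r𝔻)²`. -/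
theorem stmt18 (n : ℕ) (A : Matrix (Fin (n+2)) (Fin (n+2)) ℂ) (r : ℝ) (hr : 0 < r) :
    mu {M | ∃ w z : ℂ, M = bdiag n w z} A ≤ ENNReal.ofReal (1 / r) ↔
      ∀ z w : ℂ, ‖z‖ < r → ‖w‖ < r →
        (1 + ∑ j ∈ Finset.Icc 1 (n+1), (-1 : ℂ) ^ j * piY A j * z ^ j)
          - w * ∑ j ∈ Finset.range (n+2), (-1 : ℂ) ^ j * piX A (j+1) * z ^ j ≠ 0 := by
  classical
  have hdet : ∀ w z : ℂ, Matrix.det (1 - A * bdiag n w z) =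
      (1 + ∑ j ∈ Finset.Icc 1 (n+1), (-1 : ℂ) ^ j * piY A j * z ^ j)
        - w * ∑ j ∈ Finset.range (n+2), (-1 : ℂ) ^ j * piX A (j+1) * z ^ j :=
    fun w z => detKey n A w z
  have hopnn : ∀ M : Matrix (Fin (n+2)) (Fin (n+2)) ℂ, 0 ≤ opNorm M := fun M => norm_nonneg _
  unfold mu
  rw [one_div, ENNReal.ofReal_inv_of_pos hr, ENNReal.inv_le_inv, le_iInf_iff]
  constructor
  · intro h z w hz hw hP
    have hmem : (bdiag n w z) ∈ {M | ∃ w z : ℂ, M = bdiag n w z} := ⟨w, z, rfl⟩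
    have hd0 : Matrix.det (1 - A * bdiag n w z) = 0 := by rw [hdet]; exact hP
    have hle := h ⟨bdiag n w z, hmem, hd0⟩
    rw [ENNReal.ofReal_le_ofReal_iff (hopnn _)] at hle
    have hub : opNorm (bdiag n w z) ≤ max ‖w‖ ‖z‖ := by
      apply opNorm_diagonal_le
      · exact le_trans (norm_nonneg w) (le_max_left _ _)
      · intro i
        by_cases hi : i = 0 <;> simp [hi, le_max_left, le_max_right]
    have hmax : max ‖w‖ ‖z‖ < r := max_lt hw hz
    linarith [le_trans hle hub]
  · rintro h ⟨X, ⟨w, z, rfl⟩, hdet0⟩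
    apply ENNReal.ofReal_le_ofReal
    by_contra hc
    push_neg at hc
    have hw : ‖w‖ < r := by
      refine lt_of_le_of_lt ?_ hc
      simpa [bdiag] using abs_le_opNorm_diagonal (fun i : Fin (n+2) => if i = 0 then w else z) 0
    have hz : ‖z‖ < r := by
      refine lt_of_le_of_lt ?_ hc
      simpa [bdiag] using abs_le_opNorm_diagonal (fun i : Fin (n+2) => if i = 0 then w else z) 1
    exact h z w hz hw (by rw [← hdet]; exact hdet0)
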